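/- Let e(t) = exp(2πit), and for j = 0, 1, …, 7 set P_j = e(j/8)·P₀ and Q_j = e(j/8)·Q₀, where P₀ = [1, 1.3] × [−1.5, 1.5] and Q₀ = [0, 2] × [−0.1, 0.1] are regarded as subsets of ℂ. Then every continuous curve γ : [0,1] → ℂ with |γ(0)| = 1, |γ(1)| = 2 and 1 ≤ |γ(t)| ≤ 2 for all t contains a horizontal crossing of some P_j or a vertical crossing of some Q_j; that is, there exist 0 ≤ s ≤ t ≤ 1 and j ∈ {0,…,7} such that either γ([s,t]) ⊆ P_j and e(−j/8)γ(s), e(−j/8)γ(t) lie on the two opposite sides {w : Re w = 1} ∩ P₀ and {w : Re w = 1.3} ∩ P₀ of P₀ (one endpoint on each), or γ([s,t]) ⊆ Q_j and e(−j/8)γ(s), e(−j/8)γ(t) lie on the two opposite sides {w : Im w = −0.1} ∩ Q₀ and {w : Im w = 0.1} ∩ Q₀ of Q₀ (one endpoint on each). -/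

import Mathlib

open Set Complex

noncomputable section

/-- `e(t) = exp(2πit)`. -/
def eRot (t : ℝ) : ℂ := Complex.exp (2 * Real.pi * t * Complex.I)

/-- The rectangle `P₀ = [1, 1.3] × [−1.5, 1.5]`, as a subset of `ℂ`. -/
def Prect : Set ℂ := {w | 1 ≤ w.re ∧ w.re ≤ 1.3 ∧ -1.5 ≤ w.im ∧ w.im ≤ 1.5}

/-- The rectangle `Q₀ = [0, 2] × [−0.1, 0.1]`, as a subset of `ℂ`. -/
def Qrect : Set ℂ := {w | 0 ≤ w.re ∧ w.re ≤ 2 ∧ -0.1 ≤ w.im ∧ w.im ≤ 0.1}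

/-- First-entry/last-exit IVT extraction: a continuous function going from `≤ p` to `≥ q`
crosses the strip `[p,q]` cleanly on some subinterval. -/
lemma crossIVT {F : ℝ → ℝ} {a b p q : ℝ} (hab : a ≤ b)
    (hF : ContinuousOn F (Icc a b)) (hpq : p < q)
    (ha : F a ≤ p) (hb : q ≤ F b) :
    ∃ s t, a ≤ s ∧ s ≤ t ∧ t ≤ b ∧ F s = p ∧ F t = q ∧
      ∀ u ∈ Icc s t, p ≤ F u ∧ F u ≤ q := by
  set T : Set ℝ := Icc a b ∩ F ⁻¹' Ici q with hT
  have hTclosed : IsClosed T := hF.preimage_isClosed_of_isClosed isClosed_Icc isClosed_Ici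
  have hTne : T.Nonempty := ⟨b, ⟨hab, le_rfl⟩, hb⟩
  have hTbdd : BddBelow T := ⟨a, fun x hx => hx.1.1⟩
  set t₀ := sInf T with ht₀
  have ht₀T : t₀ ∈ T := hTclosed.csInf_mem hTne hTbdd
  have hat₀ : a ≤ t₀ := ht₀T.1.1
  have ht₀b : t₀ ≤ b := ht₀T.1.2
  have hFt₀ : F t₀ = q := by
    obtain ⟨u, hu, hFu⟩ := intermediate_value_Icc hat₀ (hF.mono (Icc_subset_Icc le_rfl ht₀b))
      (⟨ha.trans hpq.le, ht₀T.2⟩ : q ∈ Icc (F a) (F t₀))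
    have : t₀ ≤ u := csInf_le hTbdd ⟨⟨hu.1, hu.2.trans ht₀b⟩, hFu.ge⟩
    have : u = t₀ := le_antisymm hu.2 this
    rw [← this, hFu]
  set S : Set ℝ := Icc a t₀ ∩ F ⁻¹' Iic p with hS
  have hSclosed : IsClosed S :=
    (hF.mono (Icc_subset_Icc le_rfl ht₀b)).preimage_isClosed_of_isClosed isClosed_Icc isClosed_Iic
  have hSne : S.Nonempty := ⟨a, ⟨le_rfl, hat₀⟩, ha⟩
  have hSbdd : BddAbove S := ⟨t₀, fun x hx => hx.1.2⟩
  set s₀ := sSup S with hs₀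
  have hs₀S : s₀ ∈ S := hSclosed.csSup_mem hSne hSbdd
  have has₀ : a ≤ s₀ := hs₀S.1.1
  have hs₀t₀ : s₀ ≤ t₀ := hs₀S.1.2
  have hFs₀ : F s₀ = p := by
    obtain ⟨v, hv, hFv⟩ := intermediate_value_Icc hs₀t₀
      (hF.mono (Icc_subset_Icc has₀ ht₀b))
      (⟨hs₀S.2, by rw [hFt₀]; exact hpq.le⟩ : p ∈ Icc (F s₀) (F t₀))
    have : v ≤ s₀ := le_csSup hSbdd ⟨⟨has₀.trans hv.1, hv.2⟩, hFv.le⟩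
    have : v = s₀ := le_antisymm this hv.1
    rw [← this, hFv]
  refine ⟨s₀, t₀, has₀, hs₀t₀, ht₀b, hFs₀, hFt₀, fun u hu => ⟨?_, ?_⟩⟩
  · by_contra hlt
    push_neg at hlt
    have : u ∈ S := ⟨⟨has₀.trans hu.1, hu.2⟩, hlt.le⟩
    have : u ≤ s₀ := le_csSup hSbdd this
    have : u = s₀ := le_antisymm this hu.1
    rw [this, hFs₀] at hlt; exact absurd hlt (lt_irrefl p)
  · by_contra hlt
    push_neg at hlt
    obtain ⟨v, hv, hFv⟩ := intermediate_value_Icc hu.1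
      (hF.mono (Icc_subset_Icc has₀ (hu.2.trans ht₀b)))
      (⟨by rw [hFs₀]; exact hpq.le, hlt.le⟩ : q ∈ Icc (F s₀) (F u))
    have h1 : t₀ ≤ v := csInf_le hTbdd ⟨⟨has₀.trans hv.1, (hv.2.trans hu.2).trans ht₀b⟩, hFv.ge⟩
    have : u = t₀ := le_antisymm hu.2 (h1.trans hv.2)
    rw [this, hFt₀] at hlt; exact absurd hlt (lt_irrefl q)

/-- A continuous nonvanishing function on an interval has constant sign. -/
lemma sign_const {F : ℝ → ℝ} {s t : ℝ} (hst : s ≤ t) (hF : ContinuousOn F (Icc s t))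
    (hne : ∀ u ∈ Icc s t, F u ≠ 0) :
    (∀ u ∈ Icc s t, 0 < F u) ∨ (∀ u ∈ Icc s t, F u < 0) := by
  rcases lt_or_gt_of_ne (hne s ⟨le_rfl, hst⟩) with hs | hs
  · right
    intro u hu
    by_contra hpos
    push_neg at hpos
    have hpos' : 0 < F u := lt_of_le_of_ne hpos (Ne.symm (hne u hu))
    obtain ⟨v, hv, hFv⟩ := intermediate_value_Icc hu.1 (hF.mono (Icc_subset_Icc le_rfl hu.2))
      (⟨hs.le, hpos'.le⟩ : (0:ℝ) ∈ Icc (F s) (F u))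
    exact hne v ⟨hv.1, hv.2.trans hu.2⟩ hFv
  · left
    intro u hu
    by_contra hpos
    push_neg at hpos
    have hpos' : F u < 0 := lt_of_le_of_ne hpos (hne u hu)
    obtain ⟨v, hv, hFv⟩ := intermediate_value_Icc' hu.1 (hF.mono (Icc_subset_Icc le_rfl hu.2))
      (⟨hpos'.le, hs.le⟩ : (0:ℝ) ∈ Icc (F u) (F s))
    exact hne v ⟨hv.1, hv.2.trans hu.2⟩ hFv

lemma eRot_add (s t : ℝ) : eRot (s + t) = eRot s * eRot t := by
  rw [eRot, eRot, eRot, ← Complex.exp_add]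
  congr 1
  push_cast
  ring

lemma eRot_zero : eRot 0 = 1 := by simp [eRot]

lemma abs_eRot (t : ℝ) : ‖eRot t‖ = 1 := by
  rw [eRot, Complex.norm_exp]
  simp

lemma eRot_mul_eRot_neg (t : ℝ) : eRot t * eRot (-t) = 1 := by
  rw [← eRot_add]; simp [eRot_zero]

lemma eRot_int (n : ℤ) : eRot n = 1 := by
  rw [eRot]
  have : (2 * Real.pi * (n:ℝ) : ℂ) * Complex.I = (n:ℂ) * (2 * Real.pi * Complex.I) := by
    push_cast; ring
  rw [this]
  exact Complex.exp_int_mul_two_pi_mul_I n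

lemma eRot_half_neg : eRot (-(1:ℝ)/2) = -1 := by
  rw [eRot]
  have : (2 * Real.pi * ((-(1:ℝ)/2) : ℝ) : ℂ) * Complex.I = -(Real.pi * Complex.I) := by
    push_cast; ring
  rw [this, Complex.exp_neg, Complex.exp_pi_mul_I]
  norm_num

lemma eRot_eighth : eRot (-(1:ℝ)/8) =
    Complex.ofReal (Real.sqrt 2 / 2) - Complex.ofReal (Real.sqrt 2 / 2) * Complex.I := by
  rw [eRot]
  have h : (2 * Real.pi * ((-(1:ℝ)/8) : ℝ) : ℂ) * Complex.I
      = (↑(-(Real.pi/4)) : ℂ) * Complex.I := by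
    push_cast; ring
  rw [h, Complex.exp_mul_I, ← Complex.ofReal_cos, ← Complex.ofReal_sin]
  rw [Real.cos_neg, Real.sin_neg, Real.cos_pi_div_four, Real.sin_pi_div_four]
  push_cast
  ring

lemma im_rot_eighth (z : ℂ) :
    (eRot (-(1:ℝ)/8) * z).im = Real.sqrt 2 / 2 * (z.im - z.re) := by
  rw [eRot_eighth]
  simp [sub_mul, Complex.mul_im, Complex.mul_re]
  ring

lemma cr_inv (j : ℕ) : eRot ((j:ℝ)/8) * eRot (-(j:ℝ)/8) = 1 := by
  rw [neg_div]; exact eRot_mul_eRot_neg _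

lemma cr_per (q r : ℕ) : eRot (-((r + 8*q : ℕ):ℝ)/8) = eRot (-(r:ℝ)/8) := by
  have h : (-((r + 8*q : ℕ):ℝ)/8) = (-(r:ℝ)/8) + ((-(q:ℤ) : ℤ):ℝ) := by push_cast; ring
  rw [h, eRot_add, eRot_int, mul_one]

lemma cr_mod (m : ℕ) : eRot (-(m:ℝ)/8) = eRot (-((m % 8 : ℕ):ℝ)/8) := by
  conv_lhs => rw [← Nat.mod_add_div m 8]
  exact cr_per (m/8) (m%8)

lemma cr_add4 (m : ℕ) : eRot (-((m+4 : ℕ):ℝ)/8) = - eRot (-(m:ℝ)/8) := by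
  have h : (-((m+4 : ℕ):ℝ)/8) = (-(1:ℝ)/2) + (-(m:ℝ)/8) := by push_cast; ring
  rw [h, eRot_add, eRot_half_neg, neg_one_mul]

lemma cr_add5 (k : ℕ) : eRot (-((k+5 : ℕ):ℝ)/8) = -(eRot (-(1:ℝ)/8) * eRot (-(k:ℝ)/8)) := by
  have h : (-((k+5 : ℕ):ℝ)/8) = (-(1:ℝ)/2) + ((-(1:ℝ)/8) + (-(k:ℝ)/8)) := by push_cast; ring
  rw [h, eRot_add, eRot_add, eRot_half_neg, neg_one_mul]

/-- Every continuous curve in the closed annulus `{1 ≤ |z| ≤ 2}` connecting the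
two boundary circles contains a horizontal crossing of some `P_j = e(j/8)·P₀` or a vertical
crossing of some `Q_j = e(j/8)·Q₀`, `j = 0, 1, …, 7`. -/
theorem crossing_of_annulus_crosses_a_rectangle
    (γ : ℝ → ℂ) (hcont : ContinuousOn γ (Set.Icc 0 1))
    (h0 : ‖γ 0‖ = 1) (h1 : ‖γ 1‖ = 2)
    (hin : ∀ t ∈ Set.Icc (0:ℝ) 1, 1 ≤ ‖γ t‖ ∧ ‖γ t‖ ≤ 2) :
    ∃ s t : ℝ, 0 ≤ s ∧ s ≤ t ∧ t ≤ 1 ∧ ∃ j : ℕ, j ≤ 7 ∧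
      ((γ '' Set.Icc s t ⊆ (fun w => eRot (j/8) * w) '' Prect ∧
        eRot (-(j:ℝ)/8) * γ s ∈ Prect ∧ eRot (-(j:ℝ)/8) * γ t ∈ Prect ∧
        (((eRot (-(j:ℝ)/8) * γ s).re = 1 ∧ (eRot (-(j:ℝ)/8) * γ t).re = 1.3) ∨
         ((eRot (-(j:ℝ)/8) * γ s).re = 1.3 ∧ (eRot (-(j:ℝ)/8) * γ t).re = 1))) ∨
       (γ '' Set.Icc s t ⊆ (fun w => eRot (j/8) * w) '' Qrect ∧
        eRot (-(j:ℝ)/8) * γ s ∈ Qrect ∧ eRot (-(j:ℝ)/8) * γ t ∈ Qrect ∧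
        (((eRot (-(j:ℝ)/8) * γ s).im = -0.1 ∧ (eRot (-(j:ℝ)/8) * γ t).im = 0.1) ∨
         ((eRot (-(j:ℝ)/8) * γ s).im = 0.1 ∧ (eRot (-(j:ℝ)/8) * γ t).im = -0.1)))) := by
  by_contra hNC
  -- continuity of the rotated coordinate functions
  have hIm : ∀ d : ℂ, ContinuousOn (fun u => (d * γ u).im) (Icc (0:ℝ) 1) := fun d =>
    Complex.continuous_im.comp_continuousOn (continuousOn_const.mul hcont)
  have hRe : ∀ d : ℂ, ContinuousOn (fun u => (d * γ u).re) (Icc (0:ℝ) 1) := fun d =>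
    Complex.continuous_re.comp_continuousOn (continuousOn_const.mul hcont)
  have hsq : ∀ (d : ℂ), ‖d‖ = 1 → ∀ u : ℝ,
      (d * γ u).re^2 + (d * γ u).im^2 = (‖γ u‖)^2 := by
    intro d hd u
    have h2 : (d * γ u).re^2 + (d * γ u).im^2 = (‖d * γ u‖)^2 := by
      rw [Complex.sq_norm, Complex.normSq_apply]; ring
    rw [h2, norm_mul, hd, one_mul]
  have hre_le : ∀ (d : ℂ), ‖d‖ = 1 → ∀ u : ℝ,
      (d * γ u).re ≤ ‖γ u‖ := by
    intro d hd u
    have h2 := Complex.re_le_norm (d * γ u)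
    rwa [norm_mul, hd, one_mul] at h2
  -- no vertical crossing of any Q_j occurs (otherwise we contradict hNC)
  have noQ : ∀ m : ℕ, ¬ ∃ s t : ℝ, 0 ≤ s ∧ s ≤ t ∧ t ≤ 1 ∧
      (∀ u ∈ Icc s t, eRot (-(m:ℝ)/8) * γ u ∈ Qrect) ∧
      (((eRot (-(m:ℝ)/8) * γ s).im = -0.1 ∧ (eRot (-(m:ℝ)/8) * γ t).im = 0.1) ∨
       ((eRot (-(m:ℝ)/8) * γ s).im = 0.1 ∧ (eRot (-(m:ℝ)/8) * γ t).im = -0.1)) := by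
    intro m hm
    obtain ⟨s, t, h0s, hst, ht1, hmem, hends⟩ := hm
    rw [cr_mod m] at hmem hends
    refine hNC ⟨s, t, h0s, hst, ht1, m % 8,
      Nat.le_of_lt_succ (Nat.mod_lt _ (by norm_num)),
      Or.inr ⟨?_, hmem s ⟨le_rfl, hst⟩, hmem t ⟨hst, le_rfl⟩, hends⟩⟩
    rintro z ⟨u, hu, rfl⟩
    refine ⟨eRot (-((m % 8 : ℕ):ℝ)/8) * γ u, hmem u hu, ?_⟩
    show eRot (((m % 8 : ℕ):ℝ)/8) * (eRot (-((m % 8 : ℕ):ℝ)/8) * γ u) = γ u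
    rw [← mul_assoc, cr_inv, one_mul]
  -- core extraction of a vertical crossing
  have core : ∀ (d : ℂ), ‖d‖ = 1 → ∀ a b : ℝ,
      a ∈ Icc (0:ℝ) 1 → b ∈ Icc (0:ℝ) 1 → a ≤ b →
      (d * γ a).im ≤ -0.1 → 0.1 ≤ (d * γ b).im →
      ∃ e : ℂ, (e = d ∨ e = -d) ∧ ∃ s t : ℝ, 0 ≤ s ∧ s ≤ t ∧ t ≤ 1 ∧
        (∀ u ∈ Icc s t, e * γ u ∈ Qrect) ∧
        (((e * γ s).im = -0.1 ∧ (e * γ t).im = 0.1) ∨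
         ((e * γ s).im = 0.1 ∧ (e * γ t).im = -0.1)) := by
    intro d hd a b ha hb hab hga hgb
    obtain ⟨s, t, has, hst, htb, hFs, hFt, hmid⟩ :=
      crossIVT (F := fun u => (d * γ u).im) hab
        ((hIm d).mono (Icc_subset_Icc ha.1 hb.2))
        (show (-0.1:ℝ) < 0.1 by norm_num) hga hgb
    have hsub : Icc s t ⊆ Icc (0:ℝ) 1 := Icc_subset_Icc (ha.1.trans has) (htb.trans hb.2)
    have h0s : 0 ≤ s := ha.1.trans has
    have ht1 : t ≤ 1 := htb.trans hb.2
    have hne : ∀ u ∈ Icc s t, (d * γ u).re ≠ 0 := by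
      intro u hu h0'
      have h2 := hsq d hd u
      have h3 := (hin u (hsub hu)).1
      have h4 := hmid u hu
      rw [h0'] at h2
      nlinarith [h4.1, h4.2]
    rcases sign_const hst ((hRe d).mono hsub) hne with hpos | hneg
    · refine ⟨d, Or.inl rfl, s, t, h0s, hst, ht1, ?_, Or.inl ⟨hFs, hFt⟩⟩
      intro u hu
      have h4 := hmid u hu
      exact ⟨(hpos u hu).le, (hre_le d hd u).trans (hin u (hsub hu)).2, h4.1, h4.2⟩
    · have hdneg : ‖-d‖ = 1 := by rw [norm_neg]; exact hd
      refine ⟨-d, Or.inr rfl, s, t, h0s, hst, ht1, ?_, Or.inr ⟨?_, ?_⟩⟩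
      · intro u hu
        have h4 := hmid u hu
        have h5 := hneg u hu
        refine ⟨?_, (hre_le (-d) hdneg u).trans (hin u (hsub hu)).2, ?_, ?_⟩
        · rw [neg_mul, Complex.neg_re]; linarith
        · rw [neg_mul, Complex.neg_im]; linarith [h4.2]
        · rw [neg_mul, Complex.neg_im]; linarith [h4.1]
      · rw [neg_mul, Complex.neg_im, hFs]; norm_num
      · rw [neg_mul, Complex.neg_im, hFt]
  -- the dichotomy: each of the eight half-plane constraints holds on one side
  have dich : ∀ m : ℕ, (∀ u ∈ Icc (0:ℝ) 1, -0.1 < (eRot (-(m:ℝ)/8) * γ u).im) ∨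
      (∀ u ∈ Icc (0:ℝ) 1, -0.1 < (eRot (-((m+4 : ℕ):ℝ)/8) * γ u).im) := by
    intro m
    by_contra hcon
    push_neg at hcon
    obtain ⟨⟨a, ha, hga⟩, ⟨b, hb, hgb⟩⟩ := hcon
    have hgb2 : 0.1 ≤ (eRot (-(m:ℝ)/8) * γ b).im := by
      rw [cr_add4 m, neg_mul, Complex.neg_im] at hgb
      linarith
    have hga2 : 0.1 ≤ (eRot (-((m+4 : ℕ):ℝ)/8) * γ a).im := by
      rw [cr_add4 m, neg_mul, Complex.neg_im]
      linarith
    rcases le_total a b with hab | hab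
    · obtain ⟨e, he, s, t, h0s, hst, ht1, hmem, hends⟩ :=
        core (eRot (-(m:ℝ)/8)) (abs_eRot _) a b ha hb hab hga hgb2
      rcases he with he | he
      · rw [he] at hmem hends
        exact noQ m ⟨s, t, h0s, hst, ht1, hmem, hends⟩
      · rw [he, ← cr_add4 m] at hmem hends
        exact noQ (m+4) ⟨s, t, h0s, hst, ht1, hmem, hends⟩
    · obtain ⟨e, he, s, t, h0s, hst, ht1, hmem, hends⟩ :=
        core (eRot (-((m+4 : ℕ):ℝ)/8)) (abs_eRot _) b a hb ha hab hgb hga2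
      rcases he with he | he
      · rw [he] at hmem hends
        exact noQ (m+4) ⟨s, t, h0s, hst, ht1, hmem, hends⟩
      · rw [he, cr_add4 m, neg_neg] at hmem hends
        exact noQ m ⟨s, t, h0s, hst, ht1, hmem, hends⟩
  -- main case split: does some sector pair (k, k+5) of constraints hold?
  by_cases hEx : ∃ k : ℕ, k ≤ 7 ∧ (∀ u ∈ Icc (0:ℝ) 1, -0.1 < (eRot (-(k:ℝ)/8) * γ u).im) ∧
      (∀ u ∈ Icc (0:ℝ) 1, -0.1 < (eRot (-((k+5 : ℕ):ℝ)/8) * γ u).im)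
  · obtain ⟨k, hk7, hAk, hAk5⟩ := hEx
    have s2p : (0:ℝ) ≤ Real.sqrt 2 := Real.sqrt_nonneg 2
    have s2sq : Real.sqrt 2 ^ 2 = 2 := Real.sq_sqrt (by norm_num)
    have s2lb : (1.4:ℝ) ≤ Real.sqrt 2 := by nlinarith
    have hkey : ∀ u ∈ Icc (0:ℝ) 1,
        (eRot (-(k:ℝ)/8) * γ u).im < (eRot (-(k:ℝ)/8) * γ u).re + 0.15 := by
      intro u hu
      have h5 := hAk5 u hu
      rw [cr_add5 k] at h5
      have hrw : (-(eRot (-(1:ℝ)/8) * eRot (-(k:ℝ)/8)) * γ u).im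
          = -(Real.sqrt 2 / 2 *
            ((eRot (-(k:ℝ)/8) * γ u).im - (eRot (-(k:ℝ)/8) * γ u).re)) := by
        rw [neg_mul, mul_assoc, Complex.neg_im, im_rot_eighth]
      rw [hrw] at h5
      set x := (eRot (-(k:ℝ)/8) * γ u).re with hx
      set y := (eRot (-(k:ℝ)/8) * γ u).im with hy
      by_contra hcon
      push_neg at hcon
      have hmm : (1.4:ℝ) * 0.15 ≤ Real.sqrt 2 * (y - x) :=
        mul_le_mul s2lb (by linarith) (by norm_num) s2p
      nlinarith
    have hx1 : (1.3:ℝ) < (eRot (-(k:ℝ)/8) * γ 1).re := by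
      have h01 : (1:ℝ) ∈ Icc (0:ℝ) 1 := ⟨zero_le_one, le_rfl⟩
      have hy := hAk 1 h01
      have hxy := hkey 1 h01
      have hsq1 := hsq _ (abs_eRot (-(k:ℝ)/8)) 1
      rw [h1] at hsq1
      set x := (eRot (-(k:ℝ)/8) * γ 1).re with hx
      set y := (eRot (-(k:ℝ)/8) * γ 1).im with hyy
      by_contra hcon
      push_neg at hcon
      rcases le_or_gt x (-1.2) with hxx | hxx
      · linarith
      · nlinarith [mul_pos (show (0:ℝ) < 1.45 - y by linarith)
            (show (0:ℝ) < y + 0.1 by linarith),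
          mul_nonneg (show (0:ℝ) ≤ 1.3 - x by linarith)
            (show (0:ℝ) ≤ x + 1.2 by linarith)]
    have hF0 : (eRot (-(k:ℝ)/8) * γ 0).re ≤ 1 := by
      have h2 := hre_le _ (abs_eRot (-(k:ℝ)/8)) 0
      rwa [h0] at h2
    obtain ⟨s, t, h0s, hst, ht1, hFs, hFt, hmid⟩ :=
      crossIVT (F := fun u => (eRot (-(k:ℝ)/8) * γ u).re) (zero_le_one)
        (hRe _) (show (1:ℝ) < 1.3 by norm_num) hF0 hx1.le
    have hsub : Icc s t ⊆ Icc (0:ℝ) 1 := Icc_subset_Icc h0s ht1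
    have hmem : ∀ u ∈ Icc s t, eRot (-(k:ℝ)/8) * γ u ∈ Prect := by
      intro u hu
      obtain ⟨hl, hr⟩ := hmid u hu
      have hik := hAk u (hsub hu)
      have hik2 := hkey u (hsub hu)
      exact ⟨hl, hr, by linarith, by linarith⟩
    refine hNC ⟨s, t, h0s, hst, ht1, k, hk7,
      Or.inl ⟨?_, hmem s ⟨le_rfl, hst⟩, hmem t ⟨hst, le_rfl⟩, Or.inl ⟨hFs, hFt⟩⟩⟩
    rintro z ⟨u, hu, rfl⟩
    refine ⟨eRot (-(k:ℝ)/8) * γ u, hmem u hu, ?_⟩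
    show eRot ((k:ℝ)/8) * (eRot (-(k:ℝ)/8) * γ u) = γ u
    rw [← mul_assoc, cr_inv, one_mul]
  · push_neg at hEx
    -- no such pair: then the constraints propagate around the circle, a contradiction
    have hEx' : ∀ k : ℕ, (∀ u ∈ Icc (0:ℝ) 1, -0.1 < (eRot (-(k:ℝ)/8) * γ u).im) →
        (∀ u ∈ Icc (0:ℝ) 1, -0.1 < (eRot (-((k+5 : ℕ):ℝ)/8) * γ u).im) → False := by
      intro k hP hQ
      have hc1 : eRot (-(k:ℝ)/8) = eRot (-((k % 8 : ℕ):ℝ)/8) := cr_mod k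
      have hc2 : eRot (-((k+5 : ℕ):ℝ)/8) = eRot (-((k % 8 + 5 : ℕ):ℝ)/8) := by
        conv_lhs => rw [show k+5 = (k % 8 + 5) + 8*(k/8) from by omega]
        exact cr_per (k/8) (k % 8 + 5)
      obtain ⟨v, hv, hvle⟩ := hEx (k % 8)
        (Nat.le_of_lt_succ (Nat.mod_lt _ (by norm_num)))
        (fun u hu => by rw [← hc1]; exact hP u hu)
      have := hQ v hv
      rw [hc2] at this
      linarith
    have step : ∀ m : ℕ, (∀ u ∈ Icc (0:ℝ) 1, -0.1 < (eRot (-(m:ℝ)/8) * γ u).im) →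
        (∀ u ∈ Icc (0:ℝ) 1, -0.1 < (eRot (-((m+1 : ℕ):ℝ)/8) * γ u).im) := by
      intro m hAm
      rcases dich (m+5) with h | h
      · exact (hEx' m hAm h).elim
      · intro u hu
        have h2 := h u hu
        rw [show m+5+4 = (m+1) + 8*1 from by omega, cr_per 1 (m+1)] at h2
        exact h2
    rcases dich 0 with hA0 | hA4
    · exact hEx' 0 hA0 (step _ (step _ (step _ (step _ (step _ hA0)))))
    · exact hEx' 4 hA4 (step _ (step _ (step _ (step _ (step _ hA4)))))

end
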